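/- Let p be a prime and k a field of characteristic p, and let g ∈ k[[ζ]] be a power series with zero constant term. Define power series Δ_m ∈ k[[ζ]] by Δ_1(ζ) := g(ζ) − ζ and Δ_{m+1}(ζ) := Δ_m(g(ζ)) − Δ_m(ζ) for m ≥ 1. Then Δ_p(ζ) = g^p(ζ) − ζ, where g^p denotes the p-fold composition of g with itself. -/

import Mathlib

/-- Composition of formal power series: `f.comp g = f ∘ g`, the power series obtained by
substituting `g` into `f`.  (This gives the usual composition whenever the constant
coefficient of `g` is zero.) -/
noncomputable def PowerSeries.comp {R : Type*} [CommSemiring R] (f g : PowerSeries R) :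
    PowerSeries R :=
  PowerSeries.mk fun n =>
    ∑ i ∈ Finset.range (n + 1), PowerSeries.coeff i f * PowerSeries.coeff n (g ^ i)

/-- The `m`-fold composition `g ∘ g ∘ ⋯ ∘ g` of a power series with itself
(`m = 0` gives the identity series `X`). -/
noncomputable def PowerSeries.compIterate {R : Type*} [CommSemiring R]
    (g : PowerSeries R) (m : ℕ) : PowerSeries R :=
  (fun h => PowerSeries.comp h g)^[m] PowerSeries.X

section Aux

variable {k : Type*} [Field k]

lemma comp_add' (f1 f2 g : PowerSeries k) :
    (f1 + f2).comp g = f1.comp g + f2.comp g := by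
  ext n
  simp [PowerSeries.comp, add_mul, Finset.sum_add_distrib]

lemma comp_smul' (c : k) (f g : PowerSeries k) :
    (c • f).comp g = c • f.comp g := by
  ext n
  simp [PowerSeries.comp, Finset.mul_sum, mul_assoc]

lemma comp_X' (g : PowerSeries k) (hg : PowerSeries.constantCoeff g = 0) :
    (PowerSeries.X : PowerSeries k).comp g = g := by
  ext n
  rw [PowerSeries.comp, PowerSeries.coeff_mk]
  simp only [PowerSeries.coeff_X, ite_mul, one_mul, zero_mul]
  rw [Finset.sum_ite_eq' (Finset.range (n + 1)) 1 (fun i => PowerSeries.coeff n (g ^ i))]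
  rcases Nat.eq_zero_or_pos n with h | h
  · subst h
    simp [PowerSeries.coeff_zero_eq_constantCoeff, hg]
  · simp [Finset.mem_range, Nat.lt_succ_iff, h, pow_one]

end Aux

theorem delta_p_eq_pth_iterate_sub_id
    {p : ℕ} (hp : p.Prime) {k : Type*} [Field k] (hchar : CharP k p)
    (g : PowerSeries k) (hg : PowerSeries.constantCoeff g = 0)
    (Δ : ℕ → PowerSeries k)
    (hΔ1 : Δ 1 = g - PowerSeries.X)
    (hΔ : ∀ m : ℕ, 1 ≤ m → Δ (m + 1) = PowerSeries.comp (Δ m) g - Δ m) :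
    Δ p = PowerSeries.compIterate g p - PowerSeries.X := by
  classical
  set T : Module.End k (PowerSeries k) :=
    { toFun := fun f => f.comp g
      map_add' := fun f1 f2 => comp_add' f1 f2 g
      map_smul' := fun c f => comp_smul' c f g } with hTdef
  have hTX : T PowerSeries.X = g := comp_X' g hg
  have hpow : ∀ j : ℕ, (T ^ j) PowerSeries.X = PowerSeries.compIterate g j := by
    intro j
    rw [Module.End.pow_apply]
    rfl
  have hΔpow : ∀ m : ℕ, 1 ≤ m → Δ m = ((T - 1) ^ m) PowerSeries.X := by
    intro m hm
    induction m with
    | zero => omega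
    | succ n ih =>
      rcases Nat.eq_zero_or_pos n with h0 | h1
      · subst h0
        rw [hΔ1, zero_add, pow_one, LinearMap.sub_apply, Module.End.one_apply, hTX]
      · rw [hΔ n h1, ih h1, pow_succ', Module.End.mul_apply, LinearMap.sub_apply,
          Module.End.one_apply]
        rfl
  rw [hΔpow p hp.one_le]
  have hcomm : Commute T (-1 : Module.End k (PowerSeries k)) := Commute.neg_one_right T
  have hbin : (T - 1) ^ p =
      ∑ j ∈ Finset.range (p + 1), T ^ j * (-1) ^ (p - j) * (p.choose j : Module.End k (PowerSeries k)) := by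
    rw [sub_eq_add_neg]
    exact hcomm.add_pow p
  rw [hbin, LinearMap.sum_apply]
  have hnegone : (-1 : Module.End k (PowerSeries k)) = (-1 : k) • 1 :=
    LinearMap.ext fun v => by simp
  have hterm : ∀ j ∈ Finset.range (p + 1),
      (T ^ j * (-1) ^ (p - j) * (p.choose j : Module.End k (PowerSeries k))) PowerSeries.X
        = ((-1 : k) ^ (p - j) * (p.choose j : k)) • PowerSeries.compIterate g j := by
    intro j _
    rw [Module.End.mul_apply, Module.End.mul_apply]
    have h1 : ((p.choose j : ℕ) : Module.End k (PowerSeries k)) PowerSeries.X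
        = ((p.choose j : k)) • PowerSeries.X := by
      rw [Module.End.natCast_apply, ← Nat.cast_smul_eq_nsmul k]
    rw [h1]
    have h2 : ((-1 : Module.End k (PowerSeries k)) ^ (p - j))
        = ((-1 : k) ^ (p - j)) • (1 : Module.End k (PowerSeries k)) := by
      rw [hnegone, smul_pow, one_pow]
    rw [h2, LinearMap.smul_apply, Module.End.one_apply, map_smul, map_smul, hpow, smul_smul]
  rw [Finset.sum_congr rfl hterm]
  rw [Finset.sum_range_succ]
  have hmid : ∑ j ∈ Finset.range p,
      ((-1 : k) ^ (p - j) * (p.choose j : k)) • PowerSeries.compIterate g j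
      = ((-1 : k) ^ p) • PowerSeries.compIterate g 0 := by
    rw [Finset.sum_eq_single_of_mem 0 (Finset.mem_range.2 hp.pos)]
    · simp
    · intro j hj hj0
      have hdvd : p ∣ p.choose j := hp.dvd_choose_self hj0 (Finset.mem_range.1 hj)
      have hz : ((p.choose j : ℕ) : k) = 0 := (CharP.cast_eq_zero_iff k p _).2 hdvd
      rw [hz, mul_zero, zero_smul]
  rw [hmid]
  haveI : Fact p.Prime := ⟨hp⟩
  have hneg : ((-1 : k) ^ p) = -1 := neg_one_pow_char k p
  have h0 : PowerSeries.compIterate g 0 = PowerSeries.X := rfl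
  rw [hneg, h0]
  simp [sub_eq_add_neg, add_comm]
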